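/- Let N = 2n+1 with n ≥ 1, let t_j = 2π(j−1)/N for j = 1,…,N, and let f_1,…,f_N and g_1,…,g_N be real numbers with Σ_{j=1}^{N} g_j = 0. Define A_{0,k} = (2/N) Σ_{j} f_j cos(k t_j), B_{0,k} = (2/N) Σ_{j} f_j sin(k t_j), A_{1,k} = (2/N) Σ_{j} g_j cos(k t_j), B_{1,k} = (2/N) Σ_{j} g_j sin(k t_j), and set T(t) = A_{0,0}/2 + (1/N) Σ_{k=1}^{n} { [(N−k)A_{0,k} − B_{1,k}] cos(kt) + [kA_{0,k} + B_{1,k}] cos((N−k)t) + [(N−k)B_{0,k} + A_{1,k}] sin(kt) + [−kB_{0,k} + A_{1,k}] sin((N−k)t) }. Then for every j = 1,…,N: T(t_j) = f_j and T′(t_j) = g_j. -/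

import Mathlib

open Real Finset

private lemma sum_cos_range_eq_zero (N : ℕ) (hNpos : 0 < N) (m : ℤ)
    (hm : ¬ (N:ℤ) ∣ m) :
    ∑ k ∈ range N, Real.cos ((k:ℝ) * (2 * π * m / N)) = 0 := by
  have hN0 : (N:ℝ) ≠ 0 := Nat.cast_ne_zero.2 hNpos.ne'
  set θ : ℝ := 2 * π * m / N with hθ
  set z : ℂ := Complex.exp ((θ:ℂ) * Complex.I) with hz
  have hzN : z ^ N = 1 := by
    rw [hz, ← Complex.exp_nat_mul]
    have h1 : (N:ℂ) * ((θ:ℝ) * Complex.I) = (m:ℤ) * (2 * π * Complex.I) := by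
      have hθc : ((θ:ℝ):ℂ) = 2 * π * m / N := by
        rw [hθ]; push_cast; ring
      have hNc : ((N:ℕ):ℂ) ≠ 0 := Nat.cast_ne_zero.2 hNpos.ne'
      rw [hθc]
      field_simp
    rw [h1, Complex.exp_int_mul_two_pi_mul_I]
  have hz1 : z ≠ 1 := by
    intro h
    rw [hz, Complex.exp_eq_one_iff] at h
    obtain ⟨k, hk⟩ := h
    apply hm ⟨k, ?_⟩
    have hk' : ((θ:ℝ):ℂ) * Complex.I = ((k:ℝ) * (2 * π) : ℝ) * Complex.I := by
      rw [hk]; push_cast; ring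
    have hθk : θ = (k:ℝ) * (2 * π) :=
      Complex.ofReal_injective (mul_right_cancel₀ Complex.I_ne_zero hk')
    have h2π : (2 * π : ℝ) ≠ 0 := by positivity
    have h3 : (2 * π) * (m:ℝ) = (2 * π) * ((N:ℝ) * k) := by
      rw [hθ] at hθk
      field_simp at hθk
      linear_combination (2 * π) * hθk
    have : (m:ℝ) = (N:ℝ) * k := mul_left_cancel₀ h2π h3
    exact_mod_cast this
  have hsum : ∑ k ∈ range N, z ^ k = 0 := by
    rw [geom_sum_eq hz1, hzN]
    simp
  have hre : ∀ k : ℕ, (z ^ k).re = Real.cos ((k:ℝ) * θ) := by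
    intro k
    rw [hz, ← Complex.exp_nat_mul]
    have : (k:ℂ) * (((θ:ℝ):ℂ) * Complex.I) = (((k:ℝ) * θ : ℝ):ℂ) * Complex.I := by
      push_cast; ring
    rw [this, Complex.exp_ofReal_mul_I_re]
  calc ∑ k ∈ range N, Real.cos ((k:ℝ) * θ)
      = (∑ k ∈ range N, z ^ k).re := by
        rw [Complex.re_sum]
        exact Finset.sum_congr rfl fun k _ => (hre k).symm
    _ = 0 := by rw [hsum]; simp

private lemma ortho_kernel (n N : ℕ) (hN : N = 2 * n + 1) (m : ℤ)
    (hm : m.natAbs < N) :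
    (1:ℝ) + 2 * ∑ k ∈ Icc 1 n, Real.cos ((k:ℝ) * (2 * π * m / N)) =
      if m = 0 then (N:ℝ) else 0 := by
  have hNpos : 0 < N := by omega
  have hN0 : (N:ℝ) ≠ 0 := Nat.cast_ne_zero.2 hNpos.ne'
  by_cases h0 : m = 0
  · subst h0
    simp only [if_pos rfl]
    have : ∀ k ∈ Icc 1 n, Real.cos ((k:ℝ) * (2 * π * ((0:ℤ):ℝ) / N)) = 1 := by
      intro k _; norm_num
    rw [Finset.sum_congr rfl this, Finset.sum_const, Nat.card_Icc]
    simp [hN]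
    push_cast
    ring
  · rw [if_neg h0]
    have hdvd : ¬ (N:ℤ) ∣ m := by
      intro ⟨c, hc⟩
      rcases eq_or_ne c 0 with h | h
      · exact h0 (by simp [hc, h])
      · have : (N:ℤ) ≤ m.natAbs := by
          rw [hc]
          calc (N:ℤ) = (N:ℤ) * 1 := by ring
            _ ≤ (N:ℤ) * (c.natAbs : ℤ) := by
                have : (1:ℤ) ≤ (c.natAbs : ℤ) := by
                  exact_mod_cast Nat.one_le_iff_ne_zero.2 (Int.natAbs_ne_zero.2 h)
                exact mul_le_mul_of_nonneg_left this (by positivity)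
            _ = ((N * c).natAbs : ℤ) := by
                rw [Int.natAbs_mul]; push_cast; simp
        omega
    have hrange := sum_cos_range_eq_zero N hNpos m hdvd
    set θ : ℝ := 2 * π * m / N with hθ
    set F : ℕ → ℝ := fun k => Real.cos ((k:ℝ) * θ) with hF
    have hins : range N = insert 0 (Icc 1 (2 * n)) := by
      ext a; simp only [mem_range, mem_insert, mem_Icc]; omega
    have hsplit : Icc 1 (2 * n) = Icc 1 n ∪ Icc (n + 1) (2 * n) := by
      ext a; simp only [mem_Icc, mem_union]; omega
    have hdisj : Disjoint (Icc 1 n) (Icc (n + 1) (2 * n)) := by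
      rw [Finset.disjoint_left]
      intro a ha hb
      simp only [mem_Icc] at ha hb; omega
    have himg : Icc (n + 1) (2 * n) = (Icc 1 n).image (fun k => 2 * n + 1 - k) := by
      ext a
      simp only [mem_Icc, mem_image]
      constructor
      · intro ha; exact ⟨2 * n + 1 - a, by omega, by omega⟩
      · rintro ⟨b, hb, rfl⟩; omega
    have hFrefl : ∀ k ∈ Icc 1 n, F (2 * n + 1 - k) = F k := by
      intro k hk
      simp only [mem_Icc] at hk
      have hcast : ((2 * n + 1 - k : ℕ):ℝ) = (N:ℝ) - k := by
        rw [hN]; push_cast [Nat.cast_sub (by omega : k ≤ 2 * n + 1)]; ring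
      have hNθ : (N:ℝ) * θ = (m:ℝ) * (2 * π) := by
        rw [hθ]; field_simp
      have : ((2 * n + 1 - k : ℕ):ℝ) * θ = (m:ℝ) * (2 * π) - (k:ℝ) * θ := by
        rw [hcast, ← hNθ]; ring
      simp only [hF]
      rw [this, Real.cos_int_mul_two_pi_sub]
    have hmapped : ∑ k ∈ Icc (n + 1) (2 * n), F k = ∑ k ∈ Icc 1 n, F k := by
      rw [himg, Finset.sum_image ?_]
      · exact Finset.sum_congr rfl hFrefl
      · intro a ha b hb hab
        simp only [mem_coe, mem_Icc] at ha hb hab; omega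
    rw [hins, Finset.sum_insert (by simp), hsplit, Finset.sum_union hdisj,
      hmapped] at hrange
    simp only [hF, Nat.cast_zero, zero_mul, Real.cos_zero] at hrange ⊢
    linarith

private lemma interp_core (n N : ℕ) (hN : N = 2 * n + 1) (t : ℕ → ℝ)
    (ht : ∀ j, t j = 2 * π * ((j : ℝ) - 1) / N) (h : ℕ → ℝ) (i : ℕ)
    (hi : i ∈ Icc 1 N) :
    (1 / (N:ℝ)) * ∑ j ∈ Icc 1 N, h j
      + ∑ k ∈ Icc 1 n,
        ((2 / (N:ℝ) * ∑ j ∈ Icc 1 N, h j * Real.cos ((k:ℝ) * t j)) * Real.cos ((k:ℝ) * t i)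
          + (2 / (N:ℝ) * ∑ j ∈ Icc 1 N, h j * Real.sin ((k:ℝ) * t j)) * Real.sin ((k:ℝ) * t i))
      = h i := by
  have hNpos : 0 < N := by omega
  have hN0 : (N:ℝ) ≠ 0 := Nat.cast_ne_zero.2 hNpos.ne'
  obtain ⟨hi1, hiN⟩ := mem_Icc.mp hi
  have key : ∀ j ∈ Icc 1 N,
      (1 / (N:ℝ)) * (1 + 2 * ∑ k ∈ Icc 1 n, Real.cos ((k:ℝ) * (t j - t i)))
        = if j = i then 1 else 0 := by
    intro j hj
    obtain ⟨hj1, hjN⟩ := mem_Icc.mp hj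
    have hm : ((j:ℤ) - i).natAbs < N := by omega
    have harg : ∀ k : ℕ, (k:ℝ) * (t j - t i)
        = (k:ℝ) * (2 * π * (((j:ℤ) - i : ℤ):ℝ) / N) := by
      intro k
      rw [ht j, ht i]; push_cast; ring
    rw [Finset.sum_congr rfl fun k _ => by rw [harg k]]
    rw [ortho_kernel n N hN _ hm]
    by_cases hji : (j:ℤ) - (i:ℤ) = 0
    · have hje : j = i := by omega
      rw [if_pos hji, if_pos hje]
      field_simp
    · have hje : j ≠ i := by omega
      rw [if_neg hji, if_neg hje]
      simp
  have hk1 : ∀ k : ℕ,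
      (2 / (N:ℝ) * ∑ j ∈ Icc 1 N, h j * Real.cos ((k:ℝ) * t j)) * Real.cos ((k:ℝ) * t i)
        + (2 / (N:ℝ) * ∑ j ∈ Icc 1 N, h j * Real.sin ((k:ℝ) * t j)) * Real.sin ((k:ℝ) * t i)
      = ∑ j ∈ Icc 1 N, 2 / (N:ℝ) * (h j * Real.cos ((k:ℝ) * (t j - t i))) := by
    intro k
    rw [Finset.mul_sum, Finset.mul_sum, Finset.sum_mul, Finset.sum_mul,
      ← Finset.sum_add_distrib]
    refine Finset.sum_congr rfl fun j _ => ?_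
    have : (k:ℝ) * (t j - t i) = (k:ℝ) * t j - (k:ℝ) * t i := by ring
    rw [this, Real.cos_sub]
    ring
  rw [Finset.sum_congr rfl fun k _ => hk1 k, Finset.sum_comm, Finset.mul_sum,
    ← Finset.sum_add_distrib]
  have hterm : ∀ j ∈ Icc 1 N,
      1 / (N:ℝ) * h j + ∑ k ∈ Icc 1 n, 2 / (N:ℝ) * (h j * Real.cos ((k:ℝ) * (t j - t i)))
        = if j = i then h j else 0 := by
    intro j hj
    have hpull : ∑ k ∈ Icc 1 n, 2 / (N:ℝ) * (h j * Real.cos ((k:ℝ) * (t j - t i)))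
        = (2 / (N:ℝ) * h j) * ∑ k ∈ Icc 1 n, Real.cos ((k:ℝ) * (t j - t i)) := by
      rw [Finset.mul_sum]
      exact Finset.sum_congr rfl fun k _ => by ring
    rw [hpull]
    have := key j hj
    calc 1 / (N:ℝ) * h j + (2 / (N:ℝ) * h j) * ∑ k ∈ Icc 1 n, Real.cos ((k:ℝ) * (t j - t i))
        = h j * ((1 / (N:ℝ)) * (1 + 2 * ∑ k ∈ Icc 1 n, Real.cos ((k:ℝ) * (t j - t i)))) := by
          ring
      _ = h j * (if j = i then 1 else 0) := by rw [this]
      _ = if j = i then h j else 0 := by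
          by_cases hje : j = i <;> simp [hje]
  rw [Finset.sum_congr rfl hterm, Finset.sum_ite_eq' (Icc 1 N) i h, if_pos hi]

/-- The Hermite trigonometric polynomial of formula (5), built from the discrete
Fourier coefficients of the data `f_j` (function values) and `g_j` (centered
derivative values), solves the Hermite interpolation problem of order `p = 1`
on the grid `Δ_N^{(0)}` with nodes `t_j = 2π(j-1)/N`, `N = 2n+1`. -/
theorem hermite_interpolation_p1_grid0 (n : ℕ) (hn : 1 ≤ n) (N : ℕ) (hN : N = 2 * n + 1)
    (t : ℕ → ℝ) (ht : ∀ j, t j = 2 * π * ((j : ℝ) - 1) / N)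
    (f g : ℕ → ℝ) (hg : ∑ j ∈ Icc 1 N, g j = 0)
    (A₀ B₀ A₁ B₁ : ℕ → ℝ)
    (hA₀ : ∀ k, A₀ k = 2 / (N : ℝ) * ∑ j ∈ Icc 1 N, f j * cos ((k : ℝ) * t j))
    (hB₀ : ∀ k, B₀ k = 2 / (N : ℝ) * ∑ j ∈ Icc 1 N, f j * sin ((k : ℝ) * t j))
    (hA₁ : ∀ k, A₁ k = 2 / (N : ℝ) * ∑ j ∈ Icc 1 N, g j * cos ((k : ℝ) * t j))
    (hB₁ : ∀ k, B₁ k = 2 / (N : ℝ) * ∑ j ∈ Icc 1 N, g j * sin ((k : ℝ) * t j))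
    (T : ℝ → ℝ)
    (hT : ∀ x : ℝ, T x = A₀ 0 / 2 + (1 / (N : ℝ)) * ∑ k ∈ Icc 1 n,
      ((((N : ℝ) - k) * A₀ k - B₁ k) * cos ((k : ℝ) * x) +
       ((k : ℝ) * A₀ k + B₁ k) * cos (((N : ℝ) - k) * x) +
       (((N : ℝ) - k) * B₀ k + A₁ k) * sin ((k : ℝ) * x) +
       (-(k : ℝ) * B₀ k + A₁ k) * sin (((N : ℝ) - k) * x))) :
    ∀ j ∈ Icc 1 N, T (t j) = f j ∧ deriv T (t j) = g j := by
  have hNpos : 0 < N := by omega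
  have hN0 : (N:ℝ) ≠ 0 := Nat.cast_ne_zero.2 hNpos.ne'
  intro j hj
  obtain ⟨hj1, hjN⟩ := mem_Icc.mp hj
  -- node identities
  have hNt : (N:ℝ) * t j = ((j - 1 : ℕ):ℝ) * (2 * π) := by
    rw [ht j]
    rw [Nat.cast_sub hj1]
    push_cast
    field_simp
  have hsin0 : Real.sin (((j - 1 : ℕ):ℝ) * (2 * π)) = 0 := by
    have : ((j - 1 : ℕ):ℝ) * (2 * π) = ((2 * (j - 1) : ℕ):ℝ) * π := by push_cast; ring
    rw [this, Real.sin_nat_mul_pi]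
  have hcos1 : Real.cos (((j - 1 : ℕ):ℝ) * (2 * π)) = 1 := Real.cos_nat_mul_two_pi _
  have hcosId : ∀ k : ℕ, Real.cos (((N:ℝ) - k) * t j) = Real.cos ((k:ℝ) * t j) := by
    intro k
    have harg : ((N:ℝ) - k) * t j = ((j - 1 : ℕ):ℝ) * (2 * π) - (k:ℝ) * t j := by
      rw [← hNt]; ring
    rw [harg, Real.cos_sub, hsin0, hcos1]; ring
  have hsinId : ∀ k : ℕ, Real.sin (((N:ℝ) - k) * t j) = -Real.sin ((k:ℝ) * t j) := by
    intro k
    have harg : ((N:ℝ) - k) * t j = ((j - 1 : ℕ):ℝ) * (2 * π) - (k:ℝ) * t j := by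
      rw [← hNt]; ring
    rw [harg, Real.sin_sub, hsin0, hcos1]; ring
  have e1 : A₀ 0 / 2 = (1 / (N:ℝ)) * ∑ j' ∈ Icc 1 N, f j' := by
    rw [hA₀ 0]
    have : ∀ j' ∈ Icc 1 N, f j' * Real.cos (((0:ℕ):ℝ) * t j') = f j' := by
      intro j' _; norm_num
    rw [Finset.sum_congr rfl this]; ring
  constructor
  · -- interpolation of values
    rw [hT (t j)]
    have e2 : ∑ k ∈ Icc 1 n,
        ((((N : ℝ) - k) * A₀ k - B₁ k) * Real.cos ((k : ℝ) * t j) +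
         ((k : ℝ) * A₀ k + B₁ k) * Real.cos (((N : ℝ) - k) * t j) +
         (((N : ℝ) - k) * B₀ k + A₁ k) * Real.sin ((k : ℝ) * t j) +
         (-(k : ℝ) * B₀ k + A₁ k) * Real.sin (((N : ℝ) - k) * t j))
        = ∑ k ∈ Icc 1 n, (N:ℝ) *
            (A₀ k * Real.cos ((k:ℝ) * t j) + B₀ k * Real.sin ((k:ℝ) * t j)) := by
      refine Finset.sum_congr rfl fun k _ => ?_
      rw [hcosId k, hsinId k]; ring
    rw [e2, ← Finset.mul_sum, e1]
    have : (1 / (N:ℝ)) * ((N:ℝ) * ∑ k ∈ Icc 1 n,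
        (A₀ k * Real.cos ((k:ℝ) * t j) + B₀ k * Real.sin ((k:ℝ) * t j)))
        = ∑ k ∈ Icc 1 n,
          (A₀ k * Real.cos ((k:ℝ) * t j) + B₀ k * Real.sin ((k:ℝ) * t j)) := by
      rw [← mul_assoc, one_div_mul_cancel hN0, one_mul]
    rw [this]
    simp only [hA₀, hB₀]
    exact interp_core n N hN t ht f j hj
  · -- interpolation of derivative values
    have hTfun : T = fun x => A₀ 0 / 2 + (1 / (N : ℝ)) * ∑ k ∈ Icc 1 n,
        ((((N : ℝ) - k) * A₀ k - B₁ k) * Real.cos ((k : ℝ) * x) +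
         ((k : ℝ) * A₀ k + B₁ k) * Real.cos (((N : ℝ) - k) * x) +
         (((N : ℝ) - k) * B₀ k + A₁ k) * Real.sin ((k : ℝ) * x) +
         (-(k : ℝ) * B₀ k + A₁ k) * Real.sin (((N : ℝ) - k) * x)) := funext hT
    have hd : HasDerivAt (fun x => A₀ 0 / 2 + (1 / (N : ℝ)) * ∑ k ∈ Icc 1 n,
        ((((N : ℝ) - k) * A₀ k - B₁ k) * Real.cos ((k : ℝ) * x) +
         ((k : ℝ) * A₀ k + B₁ k) * Real.cos (((N : ℝ) - k) * x) +
         (((N : ℝ) - k) * B₀ k + A₁ k) * Real.sin ((k : ℝ) * x) +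
         (-(k : ℝ) * B₀ k + A₁ k) * Real.sin (((N : ℝ) - k) * x)))
        ((1 / (N : ℝ)) * ∑ k ∈ Icc 1 n,
          ((((N : ℝ) - k) * A₀ k - B₁ k) * (-Real.sin ((k : ℝ) * t j) * ((k:ℝ) * 1)) +
           ((k : ℝ) * A₀ k + B₁ k) * (-Real.sin (((N : ℝ) - k) * t j) * (((N:ℝ) - k) * 1)) +
           (((N : ℝ) - k) * B₀ k + A₁ k) * (Real.cos ((k : ℝ) * t j) * ((k:ℝ) * 1)) +
           (-(k : ℝ) * B₀ k + A₁ k) * (Real.cos (((N : ℝ) - k) * t j) * (((N:ℝ) - k) * 1))))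
        (t j) := by
      apply HasDerivAt.const_add
      apply HasDerivAt.const_mul
      apply HasDerivAt.fun_sum
      intro k _
      exact
        (((((hasDerivAt_id (t j)).const_mul ((k:ℝ))).cos.const_mul _).add
          (((hasDerivAt_id (t j)).const_mul (((N:ℝ) - k))).cos.const_mul _)).add
          (((hasDerivAt_id (t j)).const_mul ((k:ℝ))).sin.const_mul _)).add
          (((hasDerivAt_id (t j)).const_mul (((N:ℝ) - k))).sin.const_mul _)
    rw [hTfun, hd.deriv]
    have e3 : ∑ k ∈ Icc 1 n,
        ((((N : ℝ) - k) * A₀ k - B₁ k) * (-Real.sin ((k : ℝ) * t j) * ((k:ℝ) * 1)) +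
         ((k : ℝ) * A₀ k + B₁ k) * (-Real.sin (((N : ℝ) - k) * t j) * (((N:ℝ) - k) * 1)) +
         (((N : ℝ) - k) * B₀ k + A₁ k) * (Real.cos ((k : ℝ) * t j) * ((k:ℝ) * 1)) +
         (-(k : ℝ) * B₀ k + A₁ k) * (Real.cos (((N : ℝ) - k) * t j) * (((N:ℝ) - k) * 1)))
        = ∑ k ∈ Icc 1 n, (N:ℝ) *
            (A₁ k * Real.cos ((k:ℝ) * t j) + B₁ k * Real.sin ((k:ℝ) * t j)) := by
      refine Finset.sum_congr rfl fun k _ => ?_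
      rw [hcosId k, hsinId k]; ring
    rw [e3, ← Finset.mul_sum]
    have hpull : (1 / (N:ℝ)) * ((N:ℝ) * ∑ k ∈ Icc 1 n,
        (A₁ k * Real.cos ((k:ℝ) * t j) + B₁ k * Real.sin ((k:ℝ) * t j)))
        = ∑ k ∈ Icc 1 n,
          (A₁ k * Real.cos ((k:ℝ) * t j) + B₁ k * Real.sin ((k:ℝ) * t j)) := by
      rw [← mul_assoc, one_div_mul_cancel hN0, one_mul]
    rw [hpull]
    have hcore := interp_core n N hN t ht g j hj
    rw [hg, mul_zero, zero_add] at hcore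
    simp only [hA₁, hB₁]
    exact hcore
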